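/- Riemann–Roch theorem for graphs (Baker–Norine): For every divisor d on a connected weightless loopless multigraph G of genus g with canonical divisor k_G, one has r_G(d) − r_G(k_G − d) = deg(d) − g + 1. -/

import Mathlib

open Finset

section Preliminaries

variable {V : Type} [Fintype V] [DecidableEq V]

/-- The degree of a divisor on a graph with vertex set `V`. -/
def degDiv (d : V → ℤ) : ℤ := ∑ v, d v

/-- A divisor is effective if it is nonnegative at every vertex. -/
def Effective (d : V → ℤ) : Prop := ∀ v, 0 ≤ d v

/-- The principal divisor `t_Z` associated to a subset `Z` of vertices, for the
graph with edge multiplicity function `m`. -/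
def tZ (m : V → V → ℕ) (Z : Finset V) : V → ℤ := fun v =>
  if v ∈ Z then -(∑ u ∈ Zᶜ, (m v u : ℤ)) else ∑ u ∈ Z, (m v u : ℤ)

/-- Two divisors are linearly equivalent if their difference lies in the subgroup
generated by the divisors `t_Z`. -/
def LinEquiv (m : V → V → ℕ) (d d' : V → ℤ) : Prop :=
  d - d' ∈ AddSubgroup.closure (Set.range (tZ m))

/-- The simple graph associated to an edge multiplicity function `m`
(an edge between distinct `u`, `v` whenever `m u v > 0`; loops are discarded). -/
def assocGraph (m : V → V → ℕ) : SimpleGraph V where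
  Adj u v := u ≠ v ∧ (0 < m u v ∨ 0 < m v u)
  symm := ⟨fun _ _ h => ⟨h.1.symm, h.2.symm⟩⟩
  loopless := ⟨fun _ h => h.1 rfl⟩

end Preliminaries

section Rank

variable {V : Type} [Fintype V] [DecidableEq V]

/-- The set of integers `k` such that either `k = -1`, or `k ≥ 0` and for every
effective divisor `e` of degree `k`, the divisor `d - e` is linearly equivalent
to an effective divisor. -/
def bnRankSet (m : V → V → ℕ) (d : V → ℤ) : Set ℤ :=
  {k : ℤ | k = -1 ∨ (0 ≤ k ∧ ∀ e : V → ℤ, Effective e → degDiv e = k →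
      ∃ f : V → ℤ, Effective f ∧ LinEquiv m (d - e) f)}

/-- The Baker–Norine rank of a divisor `d` on the weightless loopless multigraph
with edge multiplicity function `m`. -/
noncomputable def bnRank (m : V → V → ℕ) (d : V → ℤ) : ℤ := sSup (bnRankSet m d)

end Rank

section Genus

variable {V : Type} [Fintype V] [DecidableEq V]

/-- The genus of a weightless loopless multigraph: `|E| - |V| + 1` where
`|E| = (1/2) ∑_{u,v} m u v`. -/
def genus (m : V → V → ℕ) : ℤ :=
  (∑ u, ∑ v, (m u v : ℤ)) / 2 - Fintype.card V + 1

/-- The canonical divisor of a weightless loopless multigraph: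
`k_G(v) = val(v) - 2`. -/
def canonical (m : V → V → ℕ) : V → ℤ := fun v => (∑ u, (m v u : ℤ)) - 2

end Genus

set_option linter.unusedSectionVars false

section Lap

variable {V : Type} [Fintype V] [DecidableEq V] (m : V → V → ℕ)

/-- The Laplacian of `m` applied to `x`. -/
def Lap (x : V → ℤ) : V → ℤ := fun v => ∑ u, (m v u : ℤ) * (x u - x v)

lemma tZ_eq_lap (Z : Finset V) : tZ m Z = Lap m (fun v => if v ∈ Z then 1 else 0) := by
  funext v
  simp only [tZ, Lap]
  by_cases hv : v ∈ Z
  · rw [if_pos hv]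
    have h1 : ∀ u ∈ Finset.univ, (m v u : ℤ) * ((if u ∈ Z then (1:ℤ) else 0) - (if v ∈ Z then (1:ℤ) else 0))
        = if u ∈ Zᶜ then -(m v u : ℤ) else 0 := by
      intro u _
      by_cases hu : u ∈ Z <;> simp [hu, hv]
    rw [Finset.sum_congr rfl h1, Finset.sum_ite_mem, Finset.univ_inter,
      Finset.sum_neg_distrib]
  · rw [if_neg hv]
    have h1 : ∀ u ∈ Finset.univ, (m v u : ℤ) * ((if u ∈ Z then (1:ℤ) else 0) - (if v ∈ Z then (1:ℤ) else 0))
        = if u ∈ Z then (m v u : ℤ) else 0 := by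
      intro u _
      by_cases hu : u ∈ Z <;> simp [hu, hv]
    rw [Finset.sum_congr rfl h1, Finset.sum_ite_mem, Finset.univ_inter]

lemma lap_add (x y : V → ℤ) : Lap m (x + y) = Lap m x + Lap m y := by
  funext v
  simp only [Lap, Pi.add_apply, ← Finset.sum_add_distrib]
  exact Finset.sum_congr rfl fun u _ => by ring

lemma lap_neg (x : V → ℤ) : Lap m (-x) = -(Lap m x) := by
  funext v
  simp only [Lap, Pi.neg_apply, ← Finset.sum_neg_distrib]
  exact Finset.sum_congr rfl fun u _ => by ring

lemma lap_zsmul (t : ℤ) (x : V → ℤ) : Lap m (t • x) = t • Lap m x := by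
  funext v
  simp only [Lap, Pi.smul_apply, smul_eq_mul, Finset.mul_sum]
  exact Finset.sum_congr rfl fun u _ => by ring

lemma lap_eq_sum_single (hloop : ∀ v, m v v = 0) (x : V → ℤ) :
    Lap m x = ∑ a, x a • tZ m {a} := by
  funext v
  rw [Finset.sum_apply]
  simp only [Pi.smul_apply, smul_eq_mul]
  have hS : ∑ u ∈ ({v}:Finset V)ᶜ, (m v u : ℤ) = ∑ u, (m v u : ℤ) := by
    apply Finset.sum_subset (Finset.subset_univ _)
    intro u _ hu
    simp only [Finset.mem_compl, Finset.mem_singleton, not_not] at hu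
    subst hu; simp [hloop]
  have h1 : ∀ a ∈ Finset.univ, x a * tZ m {a} v
      = (if a = v then -(x v * ∑ u, (m v u : ℤ)) else 0) + x a * (m v a : ℤ) := by
    intro a _
    by_cases hav : a = v
    · subst hav
      simp only [tZ, Finset.mem_singleton, if_pos rfl, if_pos (rfl : a = a)]
      rw [hS]
      simp [hloop]
    · have hv : v ∉ ({a} : Finset V) := by simp [Ne.symm hav]
      simp only [tZ, if_neg hv, if_neg hav, Finset.sum_singleton, zero_add]
  rw [Finset.sum_congr rfl h1, Finset.sum_add_distrib, Finset.sum_ite_eq' Finset.univ v,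
    if_pos (Finset.mem_univ v)]
  have h2 : (Lap m x) v = (∑ a, x a * (m v a : ℤ)) - x v * ∑ u, (m v u : ℤ) := by
    simp only [Lap, Finset.mul_sum, ← Finset.sum_sub_distrib]
    exact Finset.sum_congr rfl fun u _ => by ring
  rw [h2]; ring

/-- the Laplacian as an additive hom -/
def lapHom : (V → ℤ) →+ (V → ℤ) where
  toFun := Lap m
  map_zero' := by funext v; simp [Lap]
  map_add' := lap_add m

/-- characterization of linear equivalence via the Laplacian -/
lemma linEquiv_iff (hloop : ∀ v, m v v = 0) (d d' : V → ℤ) :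
    LinEquiv m d d' ↔ ∃ x : V → ℤ, d - d' = Lap m x := by
  constructor
  · intro h
    have hle : AddSubgroup.closure (Set.range (tZ m)) ≤ (lapHom m).range := by
      rw [AddSubgroup.closure_le]
      rintro f ⟨Z, rfl⟩
      exact AddMonoidHom.mem_range.mpr ⟨fun v => if v ∈ Z then 1 else 0, (tZ_eq_lap m Z).symm⟩
    obtain ⟨x, hx⟩ := AddMonoidHom.mem_range.mp (hle h)
    exact ⟨x, hx.symm⟩
  · rintro ⟨x, hx⟩
    rw [LinEquiv, hx, lap_eq_sum_single m hloop]
    exact AddSubgroup.sum_mem _ fun a _ =>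
      AddSubgroup.zsmul_mem _ (AddSubgroup.subset_closure (Set.mem_range_self {a})) _

end Lap

section Equiv

variable {V : Type} [Fintype V] [DecidableEq V] (m : V → V → ℕ)

lemma linEquiv_refl (d : V → ℤ) : LinEquiv m d d := by
  rw [LinEquiv, sub_self]; exact AddSubgroup.zero_mem _

lemma linEquiv_symm {d d' : V → ℤ} (h : LinEquiv m d d') : LinEquiv m d' d := by
  rw [LinEquiv, show d' - d = -(d - d') by ring]
  exact AddSubgroup.neg_mem _ h

lemma linEquiv_trans {a b c : V → ℤ} (h1 : LinEquiv m a b) (h2 : LinEquiv m b c) :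
    LinEquiv m a c := by
  rw [LinEquiv, show a - c = (a - b) + (b - c) by ring]
  exact AddSubgroup.add_mem _ h1 h2

lemma linEquiv_sub_left {d d' : V → ℤ} (a : V → ℤ) (h : LinEquiv m d d') :
    LinEquiv m (a - d) (a - d') := by
  rw [LinEquiv, show a - d - (a - d') = -(d - d') by ring]
  exact AddSubgroup.neg_mem _ h

lemma linEquiv_add_right {d d' : V → ℤ} (e : V → ℤ) (h : LinEquiv m d d') :
    LinEquiv m (d + e) (d' + e) := by
  rw [LinEquiv, show d + e - (d' + e) = d - d' by ring]
  exact h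

lemma linEquiv_add {a b a' b' : V → ℤ} (h1 : LinEquiv m a a') (h2 : LinEquiv m b b') :
    LinEquiv m (a + b) (a' + b') := by
  rw [LinEquiv, show a + b - (a' + b') = (a - a') + (b - b') by ring]
  exact AddSubgroup.add_mem _ h1 h2

lemma degDiv_add (a b : V → ℤ) : degDiv (a + b) = degDiv a + degDiv b := by
  simp [degDiv, Finset.sum_add_distrib]

lemma degDiv_sub (a b : V → ℤ) : degDiv (a - b) = degDiv a - degDiv b := by
  simp [degDiv, Finset.sum_sub_distrib]

lemma degDiv_lap (hsymm : ∀ u v, m u v = m v u) (x : V → ℤ) : degDiv (Lap m x) = 0 := by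
  have h1 : degDiv (Lap m x) = (∑ v, ∑ u, (m v u : ℤ) * x u) - ∑ v, ∑ u, (m v u : ℤ) * x v := by
    rw [degDiv, ← Finset.sum_sub_distrib]
    apply Finset.sum_congr rfl
    intro v _
    rw [Lap, ← Finset.sum_sub_distrib]
    exact Finset.sum_congr rfl fun u _ => by ring
  rw [h1, Finset.sum_comm]
  have h2 : ∀ v ∈ Finset.univ, ∑ u, (m u v : ℤ) * x v = ∑ u, (m v u : ℤ) * x v :=
    fun v _ => Finset.sum_congr rfl fun u _ => by rw [hsymm u v]
  rw [Finset.sum_congr rfl h2, sub_self]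

lemma degDiv_eq_of_linEquiv (hsymm : ∀ u v, m u v = m v u) (hloop : ∀ v, m v v = 0)
    {d d' : V → ℤ} (h : LinEquiv m d d') : degDiv d = degDiv d' := by
  obtain ⟨x, hx⟩ := (linEquiv_iff m hloop d d').mp h
  have := congrArg degDiv hx
  rw [degDiv_sub, degDiv_lap m hsymm] at this
  linarith

/-- Winnability: a divisor is linearly equivalent to an effective divisor. -/
def Winnable (d : V → ℤ) : Prop := ∃ f : V → ℤ, Effective f ∧ LinEquiv m d f

/-- The divisor associated to an injective numbering of vertices. -/
def nu (ρ : V → ℕ) : V → ℤ := fun v =>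
  (∑ u ∈ Finset.univ.filter (fun u => ρ u < ρ v), (m v u : ℤ)) - 1

lemma nu_lap_neg [Nonempty V] {ρ : V → ℕ} (hρ : Function.Injective ρ) (x : V → ℤ) :
    ∃ v, nu m ρ v + Lap m x v < 0 := by
  obtain ⟨v0, _, hv0⟩ := Finset.exists_max_image Finset.univ x Finset.univ_nonempty
  set S : Finset V := Finset.univ.filter (fun u => x u = x v0) with hSdef
  have hv0S : v0 ∈ S := by simp [hSdef]
  obtain ⟨v, hvS, hvmin⟩ := Finset.exists_min_image S ρ ⟨v0, hv0S⟩
  have hxv : x v = x v0 := by simpa [hSdef] using hvS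
  refine ⟨v, ?_⟩
  have key : Lap m x v ≤ ∑ u, (if ρ u < ρ v then -(m v u : ℤ) else 0) := by
    rw [Lap]
    apply Finset.sum_le_sum
    intro u _
    by_cases h : ρ u < ρ v
    · rw [if_pos h]
      have huS : u ∉ S := fun huS => absurd (hvmin u huS) (by omega)
      have hxu : x u ≠ x v0 := by
        intro he; exact huS (by simp [hSdef, he])
      have : x u - x v ≤ -1 := by
        have := hv0 u (Finset.mem_univ u); omega
      calc (m v u : ℤ) * (x u - x v) ≤ (m v u : ℤ) * (-1) :=
            mul_le_mul_of_nonneg_left this (by positivity)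
        _ = -(m v u : ℤ) := by ring
    · rw [if_neg h]
      have : x u - x v ≤ 0 := by have := hv0 u (Finset.mem_univ u); omega
      exact mul_nonpos_of_nonneg_of_nonpos (by positivity) this
  have hsum : ∑ u, (if ρ u < ρ v then -(m v u : ℤ) else 0)
      = -(∑ u ∈ Finset.univ.filter (fun u => ρ u < ρ v), (m v u : ℤ)) := by
    rw [← Finset.sum_neg_distrib, Finset.sum_filter]
  rw [hsum] at key
  have : nu m ρ v = (∑ u ∈ Finset.univ.filter (fun u => ρ u < ρ v), (m v u : ℤ)) - 1 := rfl
  omega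

lemma nu_not_winnable [Nonempty V] (hloop : ∀ v, m v v = 0)
    {ρ : V → ℕ} (hρ : Function.Injective ρ) : ¬ Winnable m (nu m ρ) := by
  rintro ⟨f, hf, hequiv⟩
  obtain ⟨x, hx⟩ := (linEquiv_iff m hloop _ _).mp hequiv
  obtain ⟨v, hv⟩ := nu_lap_neg m hρ (-x)
  rw [lap_neg] at hv
  simp only [Pi.neg_apply] at hv
  have hfv : f v = nu m ρ v - Lap m x v := by
    have := congrFun hx v
    simp only [Pi.sub_apply] at this
    omega
  have := hf v
  omega

lemma winnable_add_effective {d : V → ℤ} (h : Winnable m d) {e : V → ℤ} (he : Effective e) :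
    Winnable m (d + e) := by
  obtain ⟨f, hf, hfe⟩ := h
  exact ⟨f + e, fun v => add_nonneg (hf v) (he v), linEquiv_add_right m e hfe⟩

lemma winnable_of_linEquiv {d d' : V → ℤ} (h : LinEquiv m d d') (hw : Winnable m d') :
    Winnable m d := by
  obtain ⟨f, hf, hfe⟩ := hw
  exact ⟨f, hf, linEquiv_trans m h hfe⟩

lemma not_winnable_both [Nonempty V] (hloop : ∀ v, m v v = 0)
    {ρ : V → ℕ} (hρ : Function.Injective ρ) (d : V → ℤ)
    (h1 : Winnable m d) (h2 : Winnable m (nu m ρ - d)) : False := by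
  apply nu_not_winnable m hloop hρ
  obtain ⟨f1, hf1, he1⟩ := h1
  obtain ⟨f2, hf2, he2⟩ := h2
  refine ⟨f1 + f2, fun v => add_nonneg (hf1 v) (hf2 v), ?_⟩
  have := linEquiv_add m he1 he2
  rw [show d + (nu m ρ - d) = nu m ρ by ring] at this
  exact this

end Equiv

section Dist

variable {V : Type} [Fintype V] [DecidableEq V] (m : V → V → ℕ)

lemma adj_iff (hsymm : ∀ u v, m u v = m v u) (hloop : ∀ v, m v v = 0) (u v : V) :
    (assocGraph m).Adj u v ↔ 0 < m u v := by
  constructor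
  · rintro ⟨hne, h | h⟩
    · exact h
    · rw [hsymm u v]; exact h
  · intro h
    refine ⟨?_, Or.inl h⟩
    rintro rfl
    rw [hloop] at h; exact absurd h (lt_irrefl 0)

lemma exists_closer_neighbor (hsymm : ∀ u v, m u v = m v u) (hloop : ∀ v, m v v = 0)
    (hconn : (assocGraph m).Connected) (q : V) {v : V} (hv : v ≠ q) :
    ∃ u, 0 < m v u ∧ (assocGraph m).dist q u + 1 = (assocGraph m).dist q v := by
  have hr : (assocGraph m).Reachable v q := hconn v q
  obtain ⟨p, hp⟩ := hr.exists_walk_length_eq_dist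
  cases p with
  | nil => exact absurd rfl hv
  | @cons _ w _ hadj p' =>
    refine ⟨w, (adj_iff m hsymm hloop v w).mp hadj, ?_⟩
    simp only [SimpleGraph.Walk.length_cons] at hp
    have h1 : (assocGraph m).dist q w ≤ p'.length := by
      rw [SimpleGraph.dist_comm]; exact SimpleGraph.dist_le p'
    have h2 : (assocGraph m).dist q v ≤ (assocGraph m).dist q w + 1 := by
      calc (assocGraph m).dist q v ≤ (assocGraph m).dist q w + (assocGraph m).dist w v :=
            hconn.dist_triangle
        _ ≤ (assocGraph m).dist q w + 1 := by
            have : (assocGraph m).dist w v ≤ 1 := by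
              rw [SimpleGraph.dist_comm]
              exact le_of_eq (SimpleGraph.dist_eq_one_iff_adj.mpr hadj)
            omega
    have h3 : (assocGraph m).dist v q = (assocGraph m).dist q v := SimpleGraph.dist_comm ..
    omega

/-- auxiliary potential -/
def potAux (c D : ℕ) (dq : V → ℕ) : V → ℤ := fun v => (c:ℤ)^D - (c:ℤ)^(D - dq v)

lemma potAux_nonneg {c D : ℕ} {dq : V → ℕ} (hc : 1 ≤ c) (v : V) : 0 ≤ potAux c D dq v := by
  rw [potAux]
  have h := pow_le_pow_right₀ (by exact_mod_cast hc : (1:ℤ) ≤ (c:ℤ)) (Nat.sub_le D (dq v))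
  linarith

lemma potAux_zero {c D : ℕ} {dq : V → ℕ} {v : V} (h : dq v = 0) : potAux c D dq v = 0 := by
  rw [potAux, h, Nat.sub_zero, sub_self]

lemma lap_potAux_le {c D : ℕ} {dq : V → ℕ} {v : V}
    (hD : ∀ w, dq w ≤ D) (hc : (∑ u, m v u) + 2 ≤ c) (hdv : 1 ≤ dq v)
    (hnb : ∃ u0, 0 < m v u0 ∧ dq u0 + 1 = dq v) :
    Lap m (potAux c D dq) v ≤ -1 := by
  obtain ⟨u0, hu0pos, hu0dist⟩ := hnb
  have hc1 : (1:ℤ) ≤ (c:ℤ) := by exact_mod_cast le_trans (by omega) hc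
  have hlap : Lap m (potAux c D dq) v
      = (∑ u, (m v u : ℤ)) * (c:ℤ)^(D - dq v) - ∑ u, (m v u : ℤ) * (c:ℤ)^(D - dq u) := by
    rw [Lap, Finset.sum_mul, ← Finset.sum_sub_distrib]
    apply Finset.sum_congr rfl
    intro u _
    have h : potAux c D dq u - potAux c D dq v = (c:ℤ)^(D - dq v) - (c:ℤ)^(D - dq u) := by
      rw [potAux, potAux]; ring
    calc (m v u : ℤ) * (potAux c D dq u - potAux c D dq v)
        = (m v u : ℤ) * ((c:ℤ)^(D - dq v) - (c:ℤ)^(D - dq u)) := by rw [h]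
      _ = (m v u : ℤ) * (c:ℤ)^(D - dq v) - (m v u : ℤ) * (c:ℤ)^(D - dq u) := by ring
  have hexp : D - dq u0 = (D - dq v) + 1 := by
    have := hD v; omega
  have hX0 : (0:ℤ) ≤ (c:ℤ)^(D - dq v) := by positivity
  have hX1 : (1:ℤ) ≤ (c:ℤ)^(D - dq v) := one_le_pow₀ hc1
  have hsum2 : (c:ℤ) * (c:ℤ)^(D - dq v) ≤ ∑ u, (m v u : ℤ) * (c:ℤ)^(D - dq u) := by
    have h1 : (1:ℤ) ≤ (m v u0 : ℤ) := by exact_mod_cast hu0pos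
    have hterm : (c:ℤ) * (c:ℤ)^(D - dq v) ≤ (m v u0 : ℤ) * (c:ℤ)^(D - dq u0) := by
      rw [hexp, pow_succ]
      have h2 : (1:ℤ) * ((c:ℤ)^(D - dq v) * c) ≤ (m v u0 : ℤ) * ((c:ℤ)^(D - dq v) * c) :=
        mul_le_mul_of_nonneg_right h1 (by positivity)
      linarith
    calc (c:ℤ) * (c:ℤ)^(D - dq v) ≤ (m v u0 : ℤ) * (c:ℤ)^(D - dq u0) := hterm
      _ ≤ ∑ u, (m v u : ℤ) * (c:ℤ)^(D - dq u) := by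
          apply Finset.single_le_sum (f := fun u => (m v u : ℤ) * (c:ℤ)^(D - dq u))
          · intro u _; positivity
          · exact Finset.mem_univ u0
  have hval : (∑ u, (m v u : ℤ)) + 2 ≤ (c:ℤ) := by exact_mod_cast hc
  have hmul := mul_le_mul_of_nonneg_right hval hX0
  linarith

/-- The potential function used for reducing divisors. -/
noncomputable def pot (q : V) : V → ℤ :=
  potAux ((Finset.univ.sup (fun w => ∑ u, m w u)) + 2)
    (Finset.univ.sup (fun w => (assocGraph m).dist q w))
    (fun w => (assocGraph m).dist q w)

lemma pot_nonneg (q v : V) : 0 ≤ pot m q v := potAux_nonneg (by omega) v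

lemma pot_self (q : V) : pot m q q = 0 := potAux_zero (by simp)

lemma lap_pot_le (hsymm : ∀ u v, m u v = m v u) (hloop : ∀ v, m v v = 0)
    (hconn : (assocGraph m).Connected) (q : V) {v : V} (hv : v ≠ q) :
    Lap m (pot m q) v ≤ -1 := by
  apply lap_potAux_le m
  · exact fun w => Finset.le_sup (f := fun w => (assocGraph m).dist q w) (Finset.mem_univ w)
  · have : (∑ u, m v u) ≤ Finset.univ.sup (fun w => ∑ u, m w u) :=
      Finset.le_sup (f := fun w => ∑ u, m w u) (Finset.mem_univ v)
    omega
  · have : (assocGraph m).dist q v ≠ 0 := by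
      rw [SimpleGraph.dist_ne_zero_iff_ne_and_reachable]
      exact ⟨Ne.symm hv, hconn q v⟩
    omega
  · exact exists_closer_neighbor m hsymm hloop hconn q hv

end Dist

section Reduce

variable {V : Type} [Fintype V] [DecidableEq V] (m : V → V → ℕ)

lemma lap_pair_symm (hsymm : ∀ u v, m u v = m v u) (x y : V → ℤ) :
    ∑ v, Lap m x v * y v = ∑ v, x v * Lap m y v := by
  have e1 : ∑ v, Lap m x v * y v
      = (∑ v, ∑ u, (m v u : ℤ) * x u * y v) - ∑ v, ∑ u, (m v u : ℤ) * x v * y v := by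
    rw [← Finset.sum_sub_distrib]
    apply Finset.sum_congr rfl; intro v _
    rw [Lap, Finset.sum_mul, ← Finset.sum_sub_distrib]
    exact Finset.sum_congr rfl fun u _ => by ring
  have e2 : ∑ v, x v * Lap m y v
      = (∑ v, ∑ u, (m v u : ℤ) * y u * x v) - ∑ v, ∑ u, (m v u : ℤ) * y v * x v := by
    rw [← Finset.sum_sub_distrib]
    apply Finset.sum_congr rfl; intro v _
    rw [Lap, Finset.mul_sum, ← Finset.sum_sub_distrib]
    exact Finset.sum_congr rfl fun u _ => by ring
  rw [e1, e2]
  have e3 : ∑ v, ∑ u, (m v u : ℤ) * x u * y v = ∑ v, ∑ u, (m v u : ℤ) * y u * x v := by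
    rw [Finset.sum_comm]
    apply Finset.sum_congr rfl; intro v _
    apply Finset.sum_congr rfl; intro u _
    rw [hsymm u v]; ring
  have e4 : ∑ v, ∑ u, (m v u : ℤ) * x v * y v = ∑ v, ∑ u, (m v u : ℤ) * y v * x v := by
    apply Finset.sum_congr rfl; intro v _
    exact Finset.sum_congr rfl fun u _ => by ring
  rw [e3, e4]

lemma qeff_exists (hsymm : ∀ u v, m u v = m v u) (hloop : ∀ v, m v v = 0)
    (hconn : (assocGraph m).Connected) (q : V) (d : V → ℤ) :
    ∃ x : V → ℤ, ∀ v, v ≠ q → 0 ≤ (d + Lap m x) v := by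
  set t : ℤ := ∑ v, max 0 (-(d v)) with ht
  have ht0 : 0 ≤ t := Finset.sum_nonneg fun v _ => le_max_left _ _
  have htv : ∀ v, -(d v) ≤ t := fun v =>
    le_trans (le_max_right _ _)
      (Finset.single_le_sum (f := fun v => max 0 (-(d v))) (fun u _ => le_max_left _ _)
        (Finset.mem_univ v))
  refine ⟨(-t) • pot m q, ?_⟩
  intro v hvq
  have hl : Lap m ((-t) • pot m q) v = (-t) * Lap m (pot m q) v := by
    rw [lap_zsmul]; simp
  have hle := lap_pot_le m hsymm hloop hconn q hvq
  have h2 : (-t) * (-1) ≤ (-t) * Lap m (pot m q) v :=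
    mul_le_mul_of_nonpos_left hle (by omega)
  have := htv v
  simp only [Pi.add_apply, hl]
  omega

/-- every divisor is linearly equivalent to a `q`-reduced divisor -/
lemma reduced_exists (hsymm : ∀ u v, m u v = m v u) (hloop : ∀ v, m v v = 0)
    (hconn : (assocGraph m).Connected) (q : V) (d : V → ℤ) :
    ∃ d' : V → ℤ, LinEquiv m d d' ∧ (∀ v, v ≠ q → 0 ≤ d' v) ∧
      (∀ A : Finset V, A.Nonempty → q ∉ A → ∃ v ∈ A, d' v + tZ m A v < 0) := by
  set Y := pot m q with hY
  set Phi : (V → ℤ) → ℤ := fun e => ∑ v, e v * Y v with hPhi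
  have hPhi_nonneg : ∀ e : V → ℤ, (∀ v, v ≠ q → 0 ≤ e v) → 0 ≤ Phi e := by
    intro e he
    apply Finset.sum_nonneg
    intro v _
    by_cases hvq : v = q
    · subst hvq; rw [hY, pot_self]; simp
    · exact mul_nonneg (he v hvq) (pot_nonneg m q v)
  set S : Set ℕ := {n | ∃ x : V → ℤ, (∀ v, v ≠ q → 0 ≤ (d + Lap m x) v)
      ∧ (Phi (d + Lap m x)).toNat = n} with hS
  have hSne : S.Nonempty := by
    obtain ⟨x, hx⟩ := qeff_exists m hsymm hloop hconn q d
    exact ⟨(Phi (d + Lap m x)).toNat, x, hx, rfl⟩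
  obtain ⟨x0, hx0eff, hx0val⟩ := Nat.sInf_mem hSne
  set d' := d + Lap m x0 with hd'
  have hPhid' : 0 ≤ Phi d' := hPhi_nonneg d' hx0eff
  refine ⟨d', ?_, hx0eff, ?_⟩
  · apply (linEquiv_iff m hloop d d').mpr
    refine ⟨-x0, ?_⟩
    rw [lap_neg]
    funext v
    simp [hd']
  · intro A hA hqA
    by_contra hcon
    push_neg at hcon
    set e := d' + tZ m A with he
    have heeq : e = d + Lap m (x0 + fun v => if v ∈ A then 1 else 0) := by
      rw [he, hd', tZ_eq_lap m A, lap_add]; abel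
    have heeff : ∀ v, v ≠ q → 0 ≤ e v := by
      intro v hvq
      by_cases hvA : v ∈ A
      · exact hcon v hvA
      · have h1 : 0 ≤ tZ m A v := by
          rw [tZ, if_neg hvA]
          positivity
        have := hx0eff v hvq
        simp only [he, Pi.add_apply]
        omega
    have hPhitZ : Phi (tZ m A) ≤ -1 := by
      have h1 : Phi (tZ m A) = ∑ v, (fun w => if w ∈ A then (1:ℤ) else 0) v * Lap m Y v := by
        rw [show Phi (tZ m A) = ∑ v, tZ m A v * Y v from rfl, tZ_eq_lap m A]
        exact lap_pair_symm m hsymm _ Y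
      rw [h1]
      have h2 : ∀ v ∈ Finset.univ, (fun w => if w ∈ A then (1:ℤ) else 0) v * Lap m Y v
          = if v ∈ A then Lap m Y v else 0 := fun v _ => by by_cases h : v ∈ A <;> simp [h]
      rw [Finset.sum_congr rfl h2, Finset.sum_ite_mem, Finset.univ_inter]
      have h3 : ∑ v ∈ A, Lap m Y v ≤ ∑ _v ∈ A, (-1 : ℤ) :=
        Finset.sum_le_sum (fun v hvA =>
          lap_pot_le m hsymm hloop hconn q (fun h => hqA (h ▸ hvA)))
      have h4 : ∑ _v ∈ A, (-1:ℤ) = -(A.card : ℤ) := by simp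
      have h5 : 1 ≤ A.card := Finset.card_pos.mpr hA
      rw [h4] at h3
      have : (1:ℤ) ≤ A.card := by exact_mod_cast h5
      omega
    have hPhiadd : Phi e = Phi d' + Phi (tZ m A) := by
      rw [show Phi e = ∑ v, (d' v + tZ m A v) * Y v from rfl]
      rw [show Phi d' + Phi (tZ m A) = (∑ v, d' v * Y v) + ∑ v, tZ m A v * Y v from rfl]
      rw [← Finset.sum_add_distrib]
      exact Finset.sum_congr rfl fun v _ => by ring
    have h0e : 0 ≤ Phi e := hPhi_nonneg e heeff
    have hmem : (Phi e).toNat ∈ S := by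
      refine ⟨x0 + fun v => if v ∈ A then 1 else 0, ?_, ?_⟩
      · rw [← heeq]; exact heeff
      · rw [← heeq]
    have hle := Nat.sInf_le hmem
    omega

end Reduce

section Order

variable {V : Type} [Fintype V] [DecidableEq V] (m : V → V → ℕ)

lemma order_extend (q : V) (d' : V → ℤ)
    (hred : ∀ A : Finset V, A.Nonempty → q ∉ A → ∃ v ∈ A, d' v + tZ m A v < 0) :
    ∀ (k : ℕ) (B : Finset V) (ρ : V → ℕ), q ∈ B → Bᶜ.card = k →
      (∀ v ∈ B, ρ v < B.card) → Set.InjOn ρ B →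
      (∀ v ∈ B, v ≠ q → d' v < ∑ u ∈ B.filter (fun u => ρ u < ρ v), (m v u : ℤ)) →
      ∃ ρ' : V → ℕ, Function.Injective ρ' ∧
        ∀ v, v ≠ q → d' v < ∑ u ∈ Finset.univ.filter (fun u => ρ' u < ρ' v), (m v u : ℤ) := by
  intro k
  induction k with
  | zero =>
    intro B ρ hqB hk hbd hinj hcond
    have hBuniv : B = Finset.univ := by
      have h : Bᶜ = ∅ := Finset.card_eq_zero.mp hk
      rwa [Finset.compl_eq_empty_iff] at h
    subst hBuniv
    exact ⟨ρ, fun a b hab => hinj (by simp) (by simp) hab,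
      fun v hv => hcond v (Finset.mem_univ v) hv⟩
  | succ n ih =>
    intro B ρ hqB hk hbd hinj hcond
    have hBc : Bᶜ.Nonempty := Finset.card_pos.mp (by omega)
    obtain ⟨v, hvBc, hvred⟩ := hred Bᶜ hBc (by simp [hqB])
    have hvB : v ∉ B := Finset.mem_compl.mp hvBc
    have htz : tZ m Bᶜ v = -(∑ u ∈ B, (m v u : ℤ)) := by
      rw [tZ, if_pos hvBc, compl_compl]
    have hvsum : d' v < ∑ u ∈ B, (m v u : ℤ) := by omega
    have hvq : v ≠ q := fun h => hvB (h ▸ hqB)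
    set ρ2 : V → ℕ := Function.update ρ v B.card with hρ2
    have hρ2v : ρ2 v = B.card := Function.update_self v B.card ρ
    have hρ2B : ∀ w ∈ B, ρ2 w = ρ w := fun w hw =>
      Function.update_of_ne (fun h => hvB (by rw [← h]; exact hw)) _ _
    have hcard : (insert v B).card = B.card + 1 := Finset.card_insert_of_notMem hvB
    apply ih (insert v B) ρ2 (Finset.mem_insert_of_mem hqB)
    · rw [Finset.compl_insert, Finset.card_erase_of_mem hvBc, hk]
      omega
    · intro w hw
      rcases Finset.mem_insert.mp hw with rfl | hwB
      · omega
      · rw [hρ2B w hwB, hcard]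
        have := hbd w hwB; omega
    · intro a ha b hb hab
      simp only [Finset.coe_insert, Set.mem_insert_iff, Finset.mem_coe] at ha hb
      rcases ha with rfl | haB <;> rcases hb with rfl | hbB
      · rfl
      · rw [hρ2v, hρ2B b hbB] at hab
        exact absurd hab.symm (Nat.ne_of_lt (hbd b hbB))
      · rw [hρ2v, hρ2B a haB] at hab
        exact absurd hab (Nat.ne_of_lt (hbd a haB))
      · exact hinj haB hbB (by rwa [hρ2B a haB, hρ2B b hbB] at hab)
    · intro w hw hwq
      rcases Finset.mem_insert.mp hw with rfl | hwB
      · have hfil : (insert w B).filter (fun u => ρ2 u < ρ2 w) = B := by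
          apply Finset.ext
          intro u
          simp only [Finset.mem_filter, Finset.mem_insert]
          constructor
          · rintro ⟨rfl | huB, hlt⟩
            · omega
            · exact huB
          · intro huB
            refine ⟨Or.inr huB, ?_⟩
            rw [hρ2B u huB, hρ2v]
            exact hbd u huB
        rw [hfil]
        exact hvsum
      · have hfil : (insert v B).filter (fun u => ρ2 u < ρ2 w)
            = B.filter (fun u => ρ u < ρ w) := by
          apply Finset.ext
          intro u
          simp only [Finset.mem_filter, Finset.mem_insert]
          constructor
          · rintro ⟨rfl | huB, hlt⟩
            · rw [hρ2v, hρ2B w hwB] at hlt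
              exact absurd (hbd w hwB) (by omega)
            · rw [hρ2B u huB, hρ2B w hwB] at hlt
              exact ⟨huB, hlt⟩
          · rintro ⟨huB, hlt⟩
            refine ⟨Or.inr huB, ?_⟩
            rwa [hρ2B u huB, hρ2B w hwB]
        rw [hfil]
        exact hcond w hwB hwq

lemma dichotomy (hsymm : ∀ u v, m u v = m v u) (hloop : ∀ v, m v v = 0)
    (hconn : (assocGraph m).Connected) [Nonempty V] (d : V → ℤ) :
    Winnable m d ∨ ∃ ρ : V → ℕ, Function.Injective ρ ∧ Winnable m (nu m ρ - d) := by
  set q := Classical.arbitrary V with hq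
  obtain ⟨d', hequiv, hqeff, hred⟩ := reduced_exists m hsymm hloop hconn q d
  by_cases hdq : 0 ≤ d' q
  · left
    refine ⟨d', ?_, hequiv⟩
    intro v
    by_cases hvq : v = q
    · subst hvq; exact hdq
    · exact hqeff v hvq
  · right
    have hstart : ∃ ρ' : V → ℕ, Function.Injective ρ' ∧
        ∀ v, v ≠ q → d' v < ∑ u ∈ Finset.univ.filter (fun u => ρ' u < ρ' v), (m v u : ℤ) := by
      apply order_extend m q d' hred ({q} : Finset V)ᶜ.card {q} (fun _ => 0)
        (Finset.mem_singleton_self q) rfl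
      · intro v hv
        rw [Finset.card_singleton]; omega
      · intro a ha b hb _
        simp only [Finset.coe_singleton, Set.mem_singleton_iff] at ha hb
        rw [ha, hb]
      · intro v hv hvq
        exact absurd (Finset.mem_singleton.mp hv) hvq
    obtain ⟨ρ, hinj, hlt⟩ := hstart
    refine ⟨ρ, hinj, ?_⟩
    have heff : Effective (nu m ρ - d') := by
      intro v
      simp only [Pi.sub_apply, nu]
      by_cases hvq : v = q
      · subst hvq
        have : (0:ℤ) ≤ ∑ u ∈ Finset.univ.filter (fun u => ρ u < ρ q), (m q u : ℤ) := by
          positivity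
        omega
      · have := hlt v hvq; omega
    exact winnable_of_linEquiv m (linEquiv_sub_left m (nu m ρ) hequiv)
      ⟨nu m ρ - d', heff, linEquiv_refl m _⟩

end Order

section RankChar

variable {V : Type} [Fintype V] [DecidableEq V] (m : V → V → ℕ)

/-- positive part degree -/
def degPlus (d : V → ℤ) : ℤ := ∑ v, max (d v) 0

lemma degPlus_nonneg (d : V → ℤ) : 0 ≤ degPlus d :=
  Finset.sum_nonneg fun v _ => le_max_right _ _

lemma degPlus_mono {a b : V → ℤ} (h : ∀ v, a v ≤ b v) : degPlus a ≤ degPlus b :=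
  Finset.sum_le_sum fun v _ => max_le_max (h v) le_rfl

lemma degPlus_of_effective {e : V → ℤ} (he : Effective e) : degPlus e = degDiv e :=
  Finset.sum_congr rfl fun v _ => max_eq_left (he v)

/-- the Baker–Norine minimization set -/
def TSet (d : V → ℤ) : Set ℤ :=
  {t : ℤ | ∃ ρ : V → ℕ, Function.Injective ρ ∧
    ∃ d' : V → ℤ, LinEquiv m d d' ∧ degPlus (d' - nu m ρ) = t}

lemma TSet_nonneg (d : V → ℤ) : ∀ t ∈ TSet m d, (0:ℤ) ≤ t := by
  rintro t ⟨ρ, hρ, d', hd', rfl⟩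
  exact degPlus_nonneg _

lemma TSet_bddBelow (d : V → ℤ) : BddBelow (TSet m d) := ⟨0, fun t ht => TSet_nonneg m d t ht⟩

lemma TSet_nonempty (d : V → ℤ) : (TSet m d).Nonempty := by
  refine ⟨_, fun v => ((Fintype.equivFin V) v : ℕ), fun a b hab => ?_, d, linEquiv_refl m d, rfl⟩
  exact (Fintype.equivFin V).injective (Fin.ext hab)

lemma rank_eq (hsymm : ∀ u v, m u v = m v u) (hloop : ∀ v, m v v = 0)
    (hconn : (assocGraph m).Connected) [Nonempty V] (d : V → ℤ) :
    bnRank m d = sInf (TSet m d) - 1 := by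
  set μ := sInf (TSet m d) with hμ
  have hμmem : μ ∈ TSet m d := Int.csInf_mem (TSet_nonempty m d) (TSet_bddBelow m d)
  have hμ0 : 0 ≤ μ := TSet_nonneg m d μ hμmem
  have hgreatest : IsGreatest (bnRankSet m d) (μ - 1) := by
    constructor
    · -- membership
      by_cases hμz : μ = 0
    -- if μ = 0 then μ - 1 = -1
      · left; omega
      · right
        refine ⟨by omega, ?_⟩
        intro e he hdeg
        by_contra hnw
        have hnw' : ¬ Winnable m (d - e) := hnw
        rcases dichotomy m hsymm hloop hconn (d - e) with hw | ⟨ρ, hρ, hw⟩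
        · exact hnw' hw
        · obtain ⟨f, hf, hef⟩ := hw
          set d' := nu m ρ - f + e with hd'
          have hequiv : LinEquiv m d d' := by
            rw [LinEquiv, show d - d' = -((nu m ρ - (d - e)) - f) by rw [hd']; ring]
            exact AddSubgroup.neg_mem _ hef
          have hte : ∀ v, (d' - nu m ρ) v ≤ e v := by
            intro v
            simp only [hd', Pi.sub_apply, Pi.add_apply]
            have := hf v
            omega
          have htle : degPlus (d' - nu m ρ) ≤ μ - 1 := by
            calc degPlus (d' - nu m ρ) ≤ degPlus e := degPlus_mono hte
              _ = degDiv e := degPlus_of_effective he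
              _ = μ - 1 := hdeg
          have : μ ≤ degPlus (d' - nu m ρ) :=
            csInf_le (TSet_bddBelow m d) ⟨ρ, hρ, d', hequiv, rfl⟩
          omega
    · -- upper bound
      rintro k (rfl | ⟨hk0, hk⟩)
      · omega
      · by_contra hlt
        push_neg at hlt
        -- k ≥ μ, so there is t ∈ TSet with t ≤ k
        obtain ⟨ρ, hρ, d', hequiv, ht⟩ := hμmem
        set t := degPlus (d' - nu m ρ) with htdef
        have htk : t ≤ k := by omega
        set v0 := Classical.arbitrary V with hv0
        set e : V → ℤ := fun v => max ((d' - nu m ρ) v) 0 + (if v = v0 then k - t else 0)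
          with he
        have heeff : Effective e := by
          intro v
          rw [he]
          simp only
          have h1 : 0 ≤ max ((d' - nu m ρ) v) 0 := le_max_right _ _
          by_cases hvv : v = v0 <;> simp [hvv] <;> omega
        have hedeg : degDiv e = k := by
          rw [degDiv, he]
          simp only
          rw [Finset.sum_add_distrib]
          have h1 : ∑ v, (if v = v0 then k - t else 0) = k - t := by
            rw [Finset.sum_ite_eq' Finset.univ v0 (fun _ => k - t)]
            simp
          have h2 : ∑ v, max ((d' - nu m ρ) v) 0 = t := rfl
          omega
        have hwin : Winnable m (d - e) := hk e heeff hedeg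
        have hwin2 : Winnable m (nu m ρ - (d - e)) := by
          apply winnable_of_linEquiv m (d' := nu m ρ - d' + e)
          · rw [LinEquiv, show nu m ρ - (d - e) - (nu m ρ - d' + e) = -(d - d') by ring]
            exact AddSubgroup.neg_mem _ hequiv
          · refine ⟨nu m ρ - d' + e, ?_, linEquiv_refl m _⟩
            intro v
            simp only [Pi.sub_apply, Pi.add_apply, he]
            have : 0 ≤ (if v = v0 then k - t else 0) := by
              by_cases hvv : v = v0 <;> simp [hvv] <;> omega
            have h2 : nu m ρ v - d' v + max ((d' - nu m ρ) v) 0 ≥ 0 := by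
              simp only [Pi.sub_apply]
              omega
            omega
        exact not_winnable_both m hloop hρ (d - e) hwin hwin2
  rw [bnRank, hgreatest.csSup_eq]

end RankChar

section Reversal

variable {V : Type} [Fintype V] [DecidableEq V] (m : V → V → ℕ)

lemma degPlus_sub_comm (a b : V → ℤ) :
    degPlus (a - b) = degPlus (b - a) + degDiv (a - b) := by
  rw [degPlus, degPlus, degDiv, ← Finset.sum_add_distrib]
  apply Finset.sum_congr rfl
  intro v _
  simp only [Pi.sub_apply]
  omega

/-- the reversed numbering -/
def revNum (ρ : V → ℕ) : V → ℕ := fun v => Finset.univ.sup ρ - ρ v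

lemma revNum_le (ρ : V → ℕ) (v : V) : ρ v ≤ Finset.univ.sup ρ :=
  Finset.le_sup (Finset.mem_univ v)

lemma revNum_injective {ρ : V → ℕ} (hρ : Function.Injective ρ) : Function.Injective (revNum ρ) := by
  intro a b hab
  apply hρ
  have h1 := revNum_le ρ a
  have h2 := revNum_le ρ b
  simp only [revNum] at hab
  omega

lemma revNum_lt_iff {ρ : V → ℕ} (u v : V) : revNum ρ u < revNum ρ v ↔ ρ v < ρ u := by
  have h1 := revNum_le ρ u
  have h2 := revNum_le ρ v
  simp only [revNum]
  omega

lemma nu_revNum (hloop : ∀ v, m v v = 0) {ρ : V → ℕ} (hρ : Function.Injective ρ) :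
    nu m (revNum ρ) = canonical m - nu m ρ := by
  funext v
  simp only [nu, canonical, Pi.sub_apply]
  have hfil : Finset.univ.filter (fun u => revNum ρ u < revNum ρ v)
      = Finset.univ.filter (fun u => ρ v < ρ u) :=
    Finset.filter_congr fun u _ => by rw [revNum_lt_iff]
  rw [hfil]
  have hsplit : (∑ u ∈ Finset.univ.filter (fun u => ρ v < ρ u), (m v u : ℤ))
      + (∑ u ∈ Finset.univ.filter (fun u => ρ u < ρ v), (m v u : ℤ)) = ∑ u, (m v u : ℤ) := by
    rw [Finset.sum_filter, Finset.sum_filter, ← Finset.sum_add_distrib]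
    apply Finset.sum_congr rfl
    intro u _
    by_cases huv : u = v
    · subst huv; simp [hloop]
    · have hne : ρ u ≠ ρ v := fun h => huv (hρ h)
      by_cases h : ρ u < ρ v
      · simp [h, show ¬(ρ v < ρ u) by omega]
      · simp [h, show ρ v < ρ u by omega]
  omega

lemma deg_nu (hsymm : ∀ u v, m u v = m v u) (hloop : ∀ v, m v v = 0)
    {ρ : V → ℕ} (hρ : Function.Injective ρ) : degDiv (nu m ρ) = genus m - 1 := by
  set A := ∑ v, ∑ u, (if ρ u < ρ v then (m v u : ℤ) else 0) with hAdef
  have hA : degDiv (nu m ρ) = A - Fintype.card V := by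
    rw [degDiv]
    have h1 : ∀ v ∈ Finset.univ, nu m ρ v = (∑ u, if ρ u < ρ v then (m v u : ℤ) else 0) - 1 :=
      fun v _ => by rw [nu, Finset.sum_filter]
    rw [Finset.sum_congr rfl h1, Finset.sum_sub_distrib]
    simp [Finset.card_univ, hAdef]
  have hB : ∑ v, ∑ u, (if ρ v < ρ u then (m v u : ℤ) else 0) = A := by
    rw [hAdef, Finset.sum_comm]
    apply Finset.sum_congr rfl; intro a _
    apply Finset.sum_congr rfl; intro b _
    by_cases h : ρ b < ρ a
    · rw [if_pos h, if_pos h, hsymm b a]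
    · rw [if_neg h, if_neg h]
  have htot : (∑ u, ∑ v, (m u v : ℤ)) = 2 * A := by
    have hAB : A + ∑ v, ∑ u, (if ρ v < ρ u then (m v u : ℤ) else 0) = ∑ v, ∑ u, (m v u : ℤ) := by
      rw [hAdef, ← Finset.sum_add_distrib]
      apply Finset.sum_congr rfl
      intro v _
      rw [← Finset.sum_add_distrib]
      apply Finset.sum_congr rfl
      intro u _
      by_cases huv : u = v
      · subst huv; simp [hloop]
      · have hne : ρ u ≠ ρ v := fun h => huv (hρ h)
        by_cases h : ρ u < ρ v
        · simp [h, show ¬(ρ v < ρ u) by omega]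
        · simp [h, show ρ v < ρ u by omega]
    rw [hB] at hAB
    omega
  rw [hA, genus, htot]
  omega

end Reversal

section Main

variable {V : Type} [Fintype V] [DecidableEq V] (m : V → V → ℕ)

lemma TSet_shift (hsymm : ∀ u v, m u v = m v u) (hloop : ∀ v, m v v = 0)
    (hconn : (assocGraph m).Connected) [Nonempty V] (d : V → ℤ) :
    sInf (TSet m (canonical m - d)) = sInf (TSet m d) - (degDiv d - genus m + 1) := by
  set C := degDiv d - genus m + 1 with hC
  have key : ∀ (dd : V → ℤ) (ρ : V → ℕ), Function.Injective ρ → LinEquiv m d dd →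
      degPlus (nu m (revNum ρ) - dd) = degPlus (dd - nu m (revNum ρ)) - C := by
    intro dd ρ hρ hdd
    have h1 : degPlus (dd - nu m (revNum ρ))
        = degPlus (nu m (revNum ρ) - dd) + degDiv (dd - nu m (revNum ρ)) :=
      degPlus_sub_comm dd (nu m (revNum ρ))
    have h2 : degDiv (dd - nu m (revNum ρ)) = C := by
      rw [degDiv_sub, deg_nu m hsymm hloop (revNum_injective hρ), hC,
        ← degDiv_eq_of_linEquiv m hsymm hloop hdd]
      ring
    omega
  apply le_antisymm
  · -- sInf T(K-d) ≤ sInf T d - C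
    obtain ⟨ρ, hρ, d', hd', hs⟩ := Int.csInf_mem (TSet_nonempty m d) (TSet_bddBelow m d)
    apply csInf_le (TSet_bddBelow m _)
    refine ⟨revNum ρ, revNum_injective hρ, canonical m - d', linEquiv_sub_left m _ hd', ?_⟩
    have h3 : canonical m - d' - nu m (revNum ρ) = nu m ρ - d' := by
      rw [nu_revNum m hloop hρ]; ring
    rw [h3]
    have h1 := degPlus_sub_comm d' (nu m ρ)
    have h2 : degDiv (d' - nu m ρ) = C := by
      rw [degDiv_sub, deg_nu m hsymm hloop hρ, hC, ← degDiv_eq_of_linEquiv m hsymm hloop hd']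
      ring
    omega
  · -- sInf T d - C ≤ sInf T(K-d)
    apply le_csInf (TSet_nonempty m _)
    rintro t ⟨ρ, hρ, d'', hd'', rfl⟩
    set d' := canonical m - d'' with hd'
    have hdd' : LinEquiv m d d' := by
      rw [LinEquiv, hd', show d - (canonical m - d'') = -((canonical m - d) - d'') by ring]
      exact AddSubgroup.neg_mem _ hd''
    have h3 : d'' - nu m ρ = nu m (revNum ρ) - d' := by
      rw [nu_revNum m hloop hρ, hd']; ring
    rw [h3, key d' ρ hρ hdd']
    have h4 : sInf (TSet m d) ≤ degPlus (d' - nu m (revNum ρ)) :=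
      csInf_le (TSet_bddBelow m d) ⟨revNum ρ, revNum_injective hρ, d', hdd', rfl⟩
    omega

end Main


/-- **Riemann–Roch theorem for graphs (Baker–Norine).** -/
theorem riemannRoch_graphs {V : Type} [Fintype V] [DecidableEq V]
    (m : V → V → ℕ) (hsymm : ∀ u v, m u v = m v u) (hloop : ∀ v, m v v = 0)
    (hconn : (assocGraph m).Connected)
    (d : V → ℤ) :
    bnRank m d - bnRank m (canonical m - d) = degDiv d - genus m + 1 := by
  have hne : Nonempty V := hconn.nonempty
  rw [rank_eq m hsymm hloop hconn d, rank_eq m hsymm hloop hconn (canonical m - d),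
    TSet_shift m hsymm hloop hconn d]
  ring
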